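/- The comparability graph of a finite partially ordered set contains no induced cycle of odd length greater than three. -/

import Mathlib

open Finsupp

noncomputable section

/-- An abstract simplicial complex on vertex set `V`: a downward-closed
family of finite subsets of `V`. -/
structure AbsSimplicialComplex (V : Type) where
  faces : Set (Finset V)
  down_closed : ∀ s ∈ faces, ∀ t ⊆ s, t ∈ faces

namespace AbsSimplicialComplex

variable {V : Type} [DecidableEq V]

/-- An (ordered) `n`-simplex of `K`: an injective `(n+1)`-tuple of vertices
whose image is a face of `K`. -/
def Simplex (K : AbsSimplicialComplex V) (n : ℕ) : Type :=
  {f : Fin (n + 1) ↪ V // Finset.univ.image f ∈ K.faces}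

/-- The group of simplicial `n`-chains with integer coefficients. -/
def Chains (K : AbsSimplicialComplex V) (n : ℕ) : Type :=
  K.Simplex n →₀ ℤ

instance (K : AbsSimplicialComplex V) (n : ℕ) : AddCommGroup (K.Chains n) :=
  inferInstanceAs (AddCommGroup (K.Simplex n →₀ ℤ))

/-- The `i`-th face of an `(n+1)`-simplex: delete the `i`-th vertex. -/
def face (K : AbsSimplicialComplex V) {n : ℕ} (i : Fin (n + 2)) (f : K.Simplex (n + 1)) :
    K.Simplex n :=
  ⟨(i.succAboveEmb).trans f.1, by
    refine K.down_closed _ f.2 _ ?_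
    intro x hx
    simp only [Finset.mem_image, Finset.mem_univ, true_and,
      Function.Embedding.trans_apply] at hx ⊢
    obtain ⟨j, hj⟩ := hx
    exact ⟨_, hj⟩⟩

/-- The simplicial boundary map `C_{n+1} → C_n`. -/
def boundary (K : AbsSimplicialComplex V) (n : ℕ) : K.Chains (n + 1) →+ K.Chains n :=
  Finsupp.liftAddHom fun f =>
    zmultiplesHom _ (∑ i : Fin (n + 2), ((-1 : ℤ) ^ (i : ℕ)) • Finsupp.single (K.face i f) 1)

/-- The augmentation map `C_0 → ℤ`. -/
def augmentation (K : AbsSimplicialComplex V) : K.Chains 0 →+ ℤ :=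
  Finsupp.liftAddHom fun _ => AddMonoidHom.id ℤ

/-- Simplicial homology in degree `n+1` with integer coefficients. -/
def Hsucc (K : AbsSimplicialComplex V) (n : ℕ) : Type :=
  (K.boundary n).ker ⧸ ((K.boundary (n + 1)).range.addSubgroupOf (K.boundary n).ker)

instance (K : AbsSimplicialComplex V) (n : ℕ) : AddCommGroup (K.Hsucc n) :=
  inferInstanceAs (AddCommGroup (_ ⧸ _))

/-- The first simplicial homology group with integer coefficients. -/
def H1 (K : AbsSimplicialComplex V) : Type := K.Hsucc 0

instance (K : AbsSimplicialComplex V) : AddCommGroup K.H1 :=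
  inferInstanceAs (AddCommGroup (K.Hsucc 0))

/-- The zeroth simplicial homology group with integer coefficients. -/
def H0 (K : AbsSimplicialComplex V) : Type :=
  K.Chains 0 ⧸ (K.boundary 0).range

instance (K : AbsSimplicialComplex V) : AddCommGroup K.H0 :=
  inferInstanceAs (AddCommGroup (_ ⧸ _))

/-- The reduced zeroth simplicial homology group with integer coefficients. -/
def reducedH0 (K : AbsSimplicialComplex V) : Type :=
  K.augmentation.ker ⧸ ((K.boundary 0).range.addSubgroupOf K.augmentation.ker)

instance (K : AbsSimplicialComplex V) : AddCommGroup K.reducedH0 :=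
  inferInstanceAs (AddCommGroup (_ ⧸ _))

/-- The geometric realization of an abstract simplicial complex, as a
subspace of the product `V → ℝ`. -/
def realization (K : AbsSimplicialComplex V) : Type :=
  {g : V → ℝ // (∀ v, 0 ≤ g v) ∧ (∑ᶠ v, g v) = 1 ∧ ∃ s ∈ K.faces, Function.support g = ↑s}

instance (K : AbsSimplicialComplex V) : TopologicalSpace K.realization :=
  inferInstanceAs (TopologicalSpace {g : V → ℝ // _})

end AbsSimplicialComplex

/-- An abelian group has torsion if it contains a nonzero element of finite order. -/
def HasTorsion (A : Type) [AddCommGroup A] : Prop :=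
  ∃ a : A, a ≠ 0 ∧ IsOfFinAddOrder a

/-- The clique complex (flag complex) of a simple graph: faces are the cliques. -/
def SimpleGraph.cliqueComplex {V : Type} (G : SimpleGraph V) : AbsSimplicialComplex V where
  faces := {s | G.IsClique ↑s}
  down_closed := fun _ hs _ hts => hs.subset (Finset.coe_subset.2 hts)

/-- The independence complex of a simple graph: faces are the independent sets. -/
def SimpleGraph.indComplex {V : Type} (G : SimpleGraph V) : AbsSimplicialComplex V where
  faces := {s | ∀ x ∈ s, ∀ y ∈ s, x ≠ y → ¬ G.Adj x y}
  down_closed := fun _ hs t hts => fun x hx y hy => hs x (hts hx) y (hts hy)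

/-- The comparability graph of a partial order: edges join comparable distinct elements. -/
def comparabilityGraph (P : Type) [PartialOrder P] : SimpleGraph P where
  Adj x y := x ≠ y ∧ (x ≤ y ∨ y ≤ x)
  symm := ⟨fun x y h => ⟨h.1.symm, h.2.symm⟩⟩
  loopless := ⟨fun x h => h.1 rfl⟩

/-- The order complex of a partial order: faces are the chains. -/
def orderComplex (P : Type) [PartialOrder P] : AbsSimplicialComplex P where
  faces := {s | IsChain (· ≤ ·) (↑s : Set P)}
  down_closed := fun _ hs _ hts => hs.mono (Finset.coe_subset.2 hts)

open Fin.NatCast Fin.CommRing in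
/-- the comparability graph of a finite poset has no induced cycle of
odd length greater than three. -/
theorem stmt5 {P : Type} [PartialOrder P] [Fintype P] (k : ℕ)
    (hodd : Odd k) (hk : 3 < k) :
    IsEmpty (SimpleGraph.cycleGraph k ↪g comparabilityGraph P) := by
  constructor
  intro f
  have hk5 : 5 ≤ k := by
    obtain ⟨m, rfl⟩ := hodd
    omega
  haveI : NeZero k := ⟨by omega⟩
  -- basic Fin k cast facts
  have hval : ∀ m : ℕ, m < k → ((m : Fin k) : ℕ) = m := by
    intro m hm
    exact Fin.val_cast_of_lt hm
  -- adjacency between consecutive vertices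
  have hadj : ∀ n : ℕ, (SimpleGraph.cycleGraph k).Adj (n : Fin k) ((n + 1 : ℕ) : Fin k) := by
    intro n
    rw [SimpleGraph.cycleGraph_adj']
    right
    have : ((n + 1 : ℕ) : Fin k) - (n : Fin k) = (1 : Fin k) := by
      push_cast
      ring
    rw [this]
    exact hval 1 (by omega)
  -- non-adjacency between vertices at distance two
  have hnadj : ∀ n : ℕ, ¬ (SimpleGraph.cycleGraph k).Adj (n : Fin k) ((n + 2 : ℕ) : Fin k) := by
    intro n h
    rw [SimpleGraph.cycleGraph_adj'] at h
    have h1 : (n : Fin k) - ((n + 2 : ℕ) : Fin k) = ((k - 2 : ℕ) : Fin k) := by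
      have hk0 : ((k : ℕ) : Fin k) = 0 := Fin.natCast_self k
      have hsum : ((k - 2 : ℕ) : Fin k) + ((2 : ℕ) : Fin k) = 0 := by
        rw [← Nat.cast_add]
        have : k - 2 + 2 = k := by omega
        rw [this, hk0]
      have hm2 : ((k - 2 : ℕ) : Fin k) = -((2 : ℕ) : Fin k) :=
        eq_neg_of_add_eq_zero_left hsum
      rw [hm2]
      push_cast
      ring
    have h2 : ((n + 2 : ℕ) : Fin k) - (n : Fin k) = ((2 : ℕ) : Fin k) := by
      push_cast
      ring
    rw [h1, h2, hval (k - 2) (by omega), hval 2 (by omega)] at h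
    omega
  have hne2 : ∀ n : ℕ, ((n : Fin k) : Fin k) ≠ ((n + 2 : ℕ) : Fin k) := by
    intro n h
    have h2 : ((n + 2 : ℕ) : Fin k) - (n : Fin k) = ((2 : ℕ) : Fin k) := by
      push_cast; ring
    have hz : ((2 : ℕ) : Fin k) = 0 := by
      rw [← h2, ← h, sub_self]
    have := hval 2 (by omega)
    rw [hz] at this
    simp at this
  -- the orientation predicate
  set c : ℕ → Prop := fun n => f (n : Fin k) ≤ f ((n + 1 : ℕ) : Fin k) with hc
  -- consecutive vertices are comparable
  have hcomp : ∀ n : ℕ, c n ∨ f ((n + 1 : ℕ) : Fin k) ≤ f (n : Fin k) := by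
    intro n
    have := f.map_adj_iff.2 (hadj n)
    exact this.2
  -- images at distance two are incomparable
  have hinc : ∀ n : ℕ, ¬ (f (n : Fin k) ≤ f ((n + 2 : ℕ) : Fin k) ∨
      f ((n + 2 : ℕ) : Fin k) ≤ f (n : Fin k)) := by
    intro n h
    apply hnadj n
    rw [← f.map_adj_iff]
    exact ⟨fun he => hne2 n (f.injective he), h⟩
  -- alternation
  have halt : ∀ n : ℕ, c (n + 1) ↔ ¬ c n := by
    intro n
    have hn2 : n + 1 + 1 = n + 2 := by omega
    constructor
    · intro h1 h0
      rw [hc] at h1 h0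
      simp only [hn2] at h1
      exact hinc n (Or.inl (le_trans h0 h1))
    · intro h0
      rcases hcomp (n + 1) with h | h
      · exact h
      · exfalso
        rcases hcomp n with h' | h'
        · exact h0 h'
        · rw [hn2] at h
          exact hinc n (Or.inr (le_trans h h'))
  -- period two
  have hper : ∀ n : ℕ, c (n + 2) ↔ c n := by
    intro n
    rw [show n + 2 = (n + 1) + 1 from rfl, halt, halt]
    tauto
  -- odd shift flips
  have hoddflip : ∀ m : ℕ, c (2 * m + 1) ↔ ¬ c 0 := by
    intro m
    induction m with
    | zero => simpa using halt 0
    | succ m ih =>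
      have : 2 * (m + 1) + 1 = (2 * m + 1) + 2 := by omega
      rw [this, hper]
      exact ih
  -- but c k = c 0 since the cycle closes up
  have hck : c k ↔ c 0 := by
    have h0 : ((k : ℕ) : Fin k) = ((0 : ℕ) : Fin k) := by
      simp [Fin.natCast_self]
    have h1 : ((k + 1 : ℕ) : Fin k) = ((0 + 1 : ℕ) : Fin k) := by
      push_cast
      simp [Fin.natCast_self]
    rw [hc]
    simp only [h0, h1]
  obtain ⟨m, hm⟩ := hodd
  rw [hm] at hck
  rw [hoddflip m] at hck
  tauto
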